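/- The two versions of the firefighter game are equivalent: on a finite graph G with source s, there is a strategy in the standard game (protect exactly one unburned vertex per round) leaving at most k burned vertices if and only if there is a strategy in the modified game (in each round protect an arbitrary set of unburned vertices each having a burning neighbor, subject to the constraint that after i rounds at most i vertices in total are protected) leaving at most k burned vertices. -/

import Mathlib

attribute [local instance] Classical.propDecidable

namespace Firefighter

variable {V : Type*} [Fintype V] [DecidableEq V]

/-- The set of vertices burned by the end of time step `t` in the firefighter
process on a graph `G` with fire source `s`, where `p i` is the vertex protected
in round `i` (if any); in each round the protection happens first, then the fire
spreads from burning vertices to all their unprotected neighbors. -/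
noncomputable def burn (G : SimpleGraph V) (s : V) (p : ℕ → Option V) :
    ℕ → Finset V
  | 0 => {s}
  | t + 1 => burn G s p t ∪ Finset.univ.filter
      (fun v => (∃ u ∈ burn G s p t, G.Adj u v) ∧ ∀ i ≤ t + 1, p i ≠ some v)

/-- `v` is protected at some round of strategy `p`. -/
def Protected (p : ℕ → Option V) (v : V) : Prop := ∃ i, p i = some v

/-- A valid strategy: nothing is protected at time `0`, and a vertex protected in
round `t` is neither burned before round `t` nor previously protected. -/
def Valid (G : SimpleGraph V) (s : V) (p : ℕ → Option V) : Prop :=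
  p 0 = none ∧
    ∀ t v, p t = some v → v ∉ burn G s p (t - 1) ∧ ∀ i < t, p i ≠ some v

/-- `v` eventually burns under strategy `p`. -/
def Burns (G : SimpleGraph V) (s : V) (p : ℕ → Option V) (v : V) : Prop :=
  ∃ t, v ∈ burn G s p t

/-- `v` is saved (never burns) under strategy `p`. -/
def Saved (G : SimpleGraph V) (s : V) (p : ℕ → Option V) (v : V) : Prop :=
  ∀ t, v ∉ burn G s p t

end Firefighter

namespace Firefighter

variable {V : Type*} [Fintype V] [DecidableEq V]

/-- Burned vertices by time `t` in the modified game, where `S i` is the set of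
vertices protected in round `i`. -/
noncomputable def mburn (G : SimpleGraph V) (s : V) (S : ℕ → Finset V) :
    ℕ → Finset V
  | 0 => {s}
  | t + 1 => mburn G s S t ∪ Finset.univ.filter
      (fun v => (∃ u ∈ mburn G s S t, G.Adj u v) ∧ ∀ i ≤ t + 1, v ∉ S i)

/-- A valid strategy for the modified game: nothing is protected at time `0`;
every vertex protected in round `t` is unburned, not previously protected, and
adjacent to a burning vertex; and after `i` rounds at most `i` vertices are
protected in total. -/
def MValid (G : SimpleGraph V) (s : V) (S : ℕ → Finset V) : Prop :=
  S 0 = ∅ ∧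
  (∀ t v, v ∈ S t → v ∉ mburn G s S (t - 1) ∧ (∀ i < t, v ∉ S i) ∧
    ∃ u ∈ mburn G s S (t - 1), G.Adj u v) ∧
  (∀ i : ℕ, ((Finset.range (i + 1)).biUnion S).card ≤ i)

/-- `v` eventually burns in the modified game. -/
def MBurns (G : SimpleGraph V) (s : V) (S : ℕ → Finset V) (v : V) : Prop :=
  ∃ t, v ∈ mburn G s S t

end Firefighter

namespace Firefighter

variable {V : Type*} [Fintype V] [DecidableEq V]

lemma burn_zero (G : SimpleGraph V) (s : V) (p : ℕ → Option V) :
    burn G s p 0 = {s} := by simp [burn]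

lemma burn_succ (G : SimpleGraph V) (s : V) (p : ℕ → Option V) (t : ℕ) :
    burn G s p (t + 1) = burn G s p t ∪ Finset.univ.filter
      (fun v => (∃ u ∈ burn G s p t, G.Adj u v) ∧ ∀ i ≤ t + 1, p i ≠ some v) := by
  simp [burn]

lemma mburn_zero (G : SimpleGraph V) (s : V) (S : ℕ → Finset V) :
    mburn G s S 0 = {s} := by simp [mburn]

lemma mburn_succ (G : SimpleGraph V) (s : V) (S : ℕ → Finset V) (t : ℕ) :
    mburn G s S (t + 1) = mburn G s S t ∪ Finset.univ.filter
      (fun v => (∃ u ∈ mburn G s S t, G.Adj u v) ∧ ∀ i ≤ t + 1, v ∉ S i) := by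
  simp [mburn]

lemma mburn_mono (G : SimpleGraph V) (s : V) (S : ℕ → Finset V) :
    Monotone (mburn G s S) := by
  apply monotone_nat_of_le_succ
  intro t
  rw [mburn_succ]
  exact Finset.subset_union_left

/-! ### Standard game to modified game -/

section StdToMod

variable (G : SimpleGraph V) (s : V) (p : ℕ → Option V)

/-- Joint recursion computing the burned set and the cumulative protected set
of the delayed (modified-game) strategy built from `p`. -/
noncomputable def auxBP : ℕ → Finset V × Finset V
  | 0 => ({s}, ∅)
  | t + 1 =>
      let B := (auxBP t).1
      let P := (auxBP t).2
      let N := Finset.univ.filter (fun v =>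
        (∃ i ≤ t + 1, p i = some v) ∧ (∃ u ∈ B, G.Adj u v) ∧ v ∉ B ∧ v ∉ P)
      (B ∪ Finset.univ.filter (fun v => (∃ u ∈ B, G.Adj u v) ∧ v ∉ P ∪ N), P ∪ N)

/-- The modified-game strategy built from a standard strategy `p`: protect a
vertex that `p` has (already) protected at the first time it becomes adjacent
to the fire. -/
noncomputable def mkS : ℕ → Finset V
  | 0 => ∅
  | t + 1 => Finset.univ.filter (fun v =>
      (∃ i ≤ t + 1, p i = some v) ∧ (∃ u ∈ (auxBP G s p t).1, G.Adj u v) ∧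
        v ∉ (auxBP G s p t).1 ∧ v ∉ (auxBP G s p t).2)

lemma auxBP_snd_succ (t : ℕ) :
    (auxBP G s p (t + 1)).2 = (auxBP G s p t).2 ∪ mkS G s p (t + 1) := by
  simp [auxBP, mkS]

lemma auxBP_fst_succ (t : ℕ) :
    (auxBP G s p (t + 1)).1 = (auxBP G s p t).1 ∪ Finset.univ.filter
      (fun v => (∃ u ∈ (auxBP G s p t).1, G.Adj u v) ∧
        v ∉ (auxBP G s p t).2 ∪ mkS G s p (t + 1)) := by
  simp [auxBP, mkS]

lemma auxBP_snd_eq_biUnion (t : ℕ) :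
    (auxBP G s p t).2 = (Finset.range (t + 1)).biUnion (mkS G s p) := by
  induction t with
  | zero => simp [auxBP, mkS]
  | succ t ih =>
      rw [auxBP_snd_succ, ih]
      ext v
      simp only [Finset.mem_union, Finset.mem_biUnion, Finset.mem_range,
        Nat.lt_succ_iff]
      constructor
      · rintro (⟨i, hi, h⟩ | h)
        · exact ⟨i, hi.trans (Nat.le_succ t), h⟩
        · exact ⟨t + 1, le_rfl, h⟩
      · rintro ⟨i, hi, h⟩
        rcases Nat.eq_or_lt_of_le hi with rfl | hlt
        · exact Or.inr h
        · exact Or.inl ⟨i, Nat.lt_succ_iff.mp hlt, h⟩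

lemma not_mem_auxBP_snd (t : ℕ) (v : V) :
    v ∉ (auxBP G s p t).2 ↔ ∀ i ≤ t, v ∉ mkS G s p i := by
  rw [auxBP_snd_eq_biUnion]
  simp [Nat.lt_succ_iff]

lemma mem_mkS_succ (t : ℕ) (v : V) :
    v ∈ mkS G s p (t + 1) ↔
      (∃ i ≤ t + 1, p i = some v) ∧ (∃ u ∈ (auxBP G s p t).1, G.Adj u v) ∧
        v ∉ (auxBP G s p t).1 ∧ v ∉ (auxBP G s p t).2 := by
  simp [mkS]

lemma mburn_mkS (t : ℕ) :
    mburn G s (mkS G s p) t = (auxBP G s p t).1 := by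
  induction t with
  | zero => simp [mburn, auxBP]
  | succ t ih =>
      rw [mburn_succ, ih, auxBP_fst_succ]
      congr 1
      apply Finset.filter_congr
      intro v _
      constructor
      · rintro ⟨hadj, hS⟩
        refine ⟨hadj, ?_⟩
        rw [Finset.mem_union]
        push_neg
        exact ⟨(not_mem_auxBP_snd G s p t v).2
          (fun i hi => hS i (hi.trans (Nat.le_succ t))), hS (t + 1) le_rfl⟩
      · rintro ⟨hadj, hP⟩
        rw [Finset.mem_union] at hP
        push_neg at hP
        refine ⟨hadj, fun i hi => ?_⟩
        rcases Nat.eq_or_lt_of_le hi with rfl | hlt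
        · exact hP.2
        · exact (not_mem_auxBP_snd G s p t v).1 hP.1 i (Nat.lt_succ_iff.mp hlt)

lemma exists_p_of_mem_auxBP_snd (hp0 : p 0 = none) :
    ∀ t v, v ∈ (auxBP G s p t).2 → ∃ j, 1 ≤ j ∧ j ≤ t ∧ p j = some v := by
  intro t
  induction t with
  | zero => intro v hv; simp [auxBP] at hv
  | succ t ih =>
      intro v hv
      rw [auxBP_snd_succ, Finset.mem_union] at hv
      rcases hv with hv | hv
      · obtain ⟨j, h1, h2, h3⟩ := ih v hv
        exact ⟨j, h1, h2.trans (Nat.le_succ t), h3⟩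
      · obtain ⟨⟨i, hi, hpi⟩, -, -, -⟩ := (mem_mkS_succ G s p t v).1 hv
        refine ⟨i, ?_, hi, hpi⟩
        rcases Nat.eq_zero_or_pos i with rfl | h
        · rw [hp0] at hpi; exact absurd hpi (by simp)
        · exact h

lemma p_unique (hval : Valid G s p) {a b : ℕ} {v : V}
    (ha : p a = some v) (hb : p b = some v) : a = b := by
  rcases lt_trichotomy a b with h | h | h
  · exact absurd ha ((hval.2 b v hb).2 a h)
  · exact h
  · exact absurd hb ((hval.2 a v ha).2 b h)

lemma card_auxBP_snd (hval : Valid G s p) (t : ℕ) :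
    ((auxBP G s p t).2).card ≤ t := by
  classical
  have hcard : (Finset.Icc 1 t).card = t := by simp
  refine le_trans (Finset.card_le_card_of_injOn
    (fun v => if h : ∃ j, p j = some v then h.choose else 0) ?_ ?_) (le_of_eq hcard)
  · intro v hv
    obtain ⟨j, h1, h2, h3⟩ := exists_p_of_mem_auxBP_snd G s p hval.1 t v hv
    have hex : ∃ j, p j = some v := ⟨j, h3⟩
    have : hex.choose = j := p_unique G s p hval hex.choose_spec h3
    simp only [dif_pos hex, this]
    exact Finset.mem_Icc.mpr ⟨h1, h2⟩
  · intro v hv w hw hvw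
    obtain ⟨j, _, _, h3⟩ := exists_p_of_mem_auxBP_snd G s p hval.1 t v hv
    obtain ⟨j', _, _, h3'⟩ := exists_p_of_mem_auxBP_snd G s p hval.1 t w hw
    have hexv : ∃ j, p j = some v := ⟨j, h3⟩
    have hexw : ∃ j, p j = some w := ⟨j', h3'⟩
    simp only [dif_pos hexv, dif_pos hexw] at hvw
    have := hexv.choose_spec
    rw [hvw, hexw.choose_spec] at this
    exact (Option.some_injective V this).symm

lemma mkS_mvalid (hval : Valid G s p) : MValid G s (mkS G s p) := by
  refine ⟨rfl, ?_, ?_⟩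
  · intro t v hv
    cases t with
    | zero => simp [mkS] at hv
    | succ r =>
        obtain ⟨hpex, ⟨u, hu, hadj⟩, hnb, hnp⟩ := (mem_mkS_succ G s p r v).1 hv
        have hb : mburn G s (mkS G s p) (r + 1 - 1) = (auxBP G s p r).1 := by
          simpa using mburn_mkS G s p r
        refine ⟨by rw [hb]; exact hnb, ?_, ⟨u, by rw [hb]; exact hu, hadj⟩⟩
        intro i hi
        exact (not_mem_auxBP_snd G s p r v).1 hnp i (Nat.lt_succ_iff.mp hi)
  · intro i
    rw [← auxBP_snd_eq_biUnion]
    exact card_auxBP_snd G s p hval i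

lemma mburn_mkS_subset_burn : ∀ t, mburn G s (mkS G s p) t ⊆ burn G s p t := by
  intro t
  induction t with
  | zero => rw [mburn_zero, burn_zero]
  | succ t ih =>
      intro v hv
      rw [mburn_succ, Finset.mem_union] at hv
      rcases hv with hv | hv
      · rw [burn_succ]
        exact Finset.mem_union_left _ (ih hv)
      · rw [Finset.mem_filter] at hv
        obtain ⟨-, ⟨u, hu, hadj⟩, hS⟩ := hv
        by_cases hvb : v ∈ mburn G s (mkS G s p) t
        · rw [burn_succ]
          exact Finset.mem_union_left _ (ih hvb)
        · rw [burn_succ, Finset.mem_union]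
          right
          rw [Finset.mem_filter]
          refine ⟨Finset.mem_univ v, ⟨u, ih hu, hadj⟩, ?_⟩
          intro i hi hpi
          apply hS (t + 1) le_rfl
          rw [mem_mkS_succ]
          rw [mburn_mkS] at hu hvb
          refine ⟨⟨i, hi, hpi⟩, ⟨u, hu, hadj⟩, hvb, ?_⟩
          exact (not_mem_auxBP_snd G s p t v).2
            (fun j hj => hS j (hj.trans (Nat.le_succ t)))

end StdToMod

/-! ### Modified game to standard game -/

section ModToStd

variable (S : ℕ → Finset V)

/-- The round in which `v` is protected by the modified strategy `S` (junk
value `0` if never). -/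
noncomputable def rnd (v : V) : ℕ := if h : ∃ i, v ∈ S i then Nat.find h else 0

/-- All vertices ever protected by `S`. -/
noncomputable def tot : Finset V := Finset.univ.filter (fun v => ∃ i, v ∈ S i)

/-- Greedy schedule: in each round protect a not-yet-protected vertex of `tot S`
whose `S`-round is as small as possible. Returns the protected vertex of the
round together with the cumulative protected set. -/
noncomputable def greedy : ℕ → Option V × Finset V
  | 0 => (none, ∅)
  | t + 1 =>
      if h : (tot S \ (greedy t).2).Nonempty then
        (some ((tot S \ (greedy t).2).exists_min_image (rnd S) h).choose,
          insert ((tot S \ (greedy t).2).exists_min_image (rnd S) h).choose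
            (greedy t).2)
      else (none, (greedy t).2)

/-- The standard strategy extracted from the greedy schedule. -/
noncomputable def gp (t : ℕ) : Option V := (greedy S t).1

lemma rnd_mem {v : V} (h : ∃ i, v ∈ S i) : v ∈ S (rnd S v) := by
  rw [rnd, dif_pos h]
  exact Nat.find_spec h

lemma rnd_le {v : V} {i : ℕ} (h : v ∈ S i) : rnd S v ≤ i := by
  rw [rnd, dif_pos ⟨i, h⟩]
  exact Nat.find_min' _ h

lemma greedy_snd_subset_succ (t : ℕ) : (greedy S t).2 ⊆ (greedy S (t + 1)).2 := by
  rw [greedy]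
  split
  · exact Finset.subset_insert _ _
  · exact subset_rfl

lemma greedy_snd_mono {a b : ℕ} (h : a ≤ b) : (greedy S a).2 ⊆ (greedy S b).2 := by
  induction b with
  | zero => rw [Nat.le_zero] at h; subst h; exact subset_rfl
  | succ b ih =>
      rcases Nat.eq_or_lt_of_le h with rfl | h
      · exact subset_rfl
      · exact (ih (Nat.lt_succ_iff.mp h)).trans (greedy_snd_subset_succ S b)

lemma gp_succ_spec {t : ℕ} {v : V} (h : gp S (t + 1) = some v) :
    v ∈ tot S ∧ v ∉ (greedy S t).2 ∧
      (∀ w ∈ tot S \ (greedy S t).2, rnd S v ≤ rnd S w) ∧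
      (greedy S (t + 1)).2 = insert v (greedy S t).2 := by
  rw [gp, greedy] at h
  rw [greedy]
  split at h
  · next hne =>
      simp only [Option.some.injEq] at h
      subst h
      obtain ⟨hmem, hmin⟩ :=
        ((tot S \ (greedy S t).2).exists_min_image (rnd S) hne).choose_spec
      rw [Finset.mem_sdiff] at hmem
      rw [dif_pos hne]
      exact ⟨hmem.1, hmem.2, hmin, rfl⟩
  · simp at h

lemma gp_none_spec {t : ℕ} (h : gp S (t + 1) = none) :
    (greedy S (t + 1)).2 = (greedy S t).2 := by
  rw [gp, greedy] at h
  rw [greedy]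
  split at h
  · simp at h
  · next hne => rw [dif_neg hne]

lemma mem_greedy_snd_iff (t : ℕ) (v : V) :
    v ∈ (greedy S t).2 ↔ ∃ j ≤ t, gp S j = some v := by
  induction t with
  | zero =>
      simp only [greedy, Finset.notMem_empty, false_iff]
      push_neg
      intro j hj
      rw [Nat.le_zero] at hj
      subst hj
      simp [gp, greedy]
  | succ t ih =>
      constructor
      · intro hv
        rcases hgp : gp S (t + 1) with _ | w
        · rw [gp_none_spec S hgp] at hv
          obtain ⟨j, hj, h⟩ := ih.1 hv
          exact ⟨j, hj.trans (Nat.le_succ t), h⟩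
        · rw [(gp_succ_spec S hgp).2.2.2, Finset.mem_insert] at hv
          rcases hv with rfl | hv
          · exact ⟨t + 1, le_rfl, hgp⟩
          · obtain ⟨j, hj, h⟩ := ih.1 hv
            exact ⟨j, hj.trans (Nat.le_succ t), h⟩
      · rintro ⟨j, hj, h⟩
        rcases Nat.eq_or_lt_of_le hj with rfl | hj
        · obtain ⟨-, -, -, heq⟩ := gp_succ_spec S h
          rw [heq]
          exact Finset.mem_insert_self _ _
        · exact greedy_snd_subset_succ S t (ih.2 ⟨j, Nat.lt_succ_iff.mp hj, h⟩)

lemma gp_unique {a b : ℕ} {v : V} (ha : gp S a = some v) (hb : gp S b = some v) :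
    a = b := by
  have key : ∀ {a b : ℕ}, a < b → gp S a = some v → gp S b = some v → False := by
    intro a b hab ha hb
    cases b with
    | zero => exact absurd hab (Nat.not_lt_zero a)
    | succ c =>
        have h1 : v ∈ (greedy S c).2 :=
          (mem_greedy_snd_iff S c v).2 ⟨a, Nat.lt_succ_iff.mp hab, ha⟩
        exact (gp_succ_spec S hb).2.1 h1
  rcases lt_trichotomy a b with h | h | h
  · exact absurd (key h ha hb) not_false
  · exact h
  · exact absurd (key h hb ha) not_false

lemma mem_tot_iff (v : V) : v ∈ tot S ↔ ∃ i, v ∈ S i := by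
  simp [tot]

/-- The key scheduling lemma: every vertex protected by `S` in round `i` is
protected by the greedy schedule by round `i`. -/
lemma protected_by (hcard : ∀ i : ℕ, ((Finset.range (i + 1)).biUnion S).card ≤ i)
    {i : ℕ} {v : V} (hv : v ∈ S i) : ∃ j ≤ i, gp S j = some v := by
  by_contra hcon
  push_neg at hcon
  have hvni : v ∉ (greedy S i).2 := by
    rw [mem_greedy_snd_iff]
    rintro ⟨j, hj, h⟩
    exact hcon j hj h
  have hvtot : v ∈ tot S := (mem_tot_iff S v).2 ⟨i, hv⟩
  have key : ∀ j, j ≤ i → (greedy S j).2.card = j ∧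
      (∀ w ∈ (greedy S j).2, w ∈ tot S ∧ rnd S w ≤ i) := by
    intro j
    induction j with
    | zero => intro _; simp [greedy]
    | succ j ih =>
        intro hji
        obtain ⟨hc, hr⟩ := ih (Nat.le_of_succ_le hji)
        have hvnj : v ∉ (greedy S j).2 := fun h =>
          hvni (greedy_snd_mono S (Nat.le_of_succ_le hji) h)
        have hne : (tot S \ (greedy S j).2).Nonempty :=
          ⟨v, Finset.mem_sdiff.mpr ⟨hvtot, hvnj⟩⟩
        have hgp : ∃ w, gp S (j + 1) = some w := by
          rw [gp, greedy, dif_pos hne]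
          exact ⟨_, rfl⟩
        obtain ⟨w, hw⟩ := hgp
        obtain ⟨hwtot, hwnj, hmin, heq⟩ := gp_succ_spec S hw
        constructor
        · rw [heq, Finset.card_insert_of_notMem hwnj, hc]
        · intro u hu
          rw [heq, Finset.mem_insert] at hu
          rcases hu with rfl | hu
          · refine ⟨hwtot, ?_⟩
            have := hmin v (Finset.mem_sdiff.mpr ⟨hvtot, hvnj⟩)
            exact this.trans (rnd_le S hv)
          · exact hr u hu
  obtain ⟨hc, hr⟩ := key i le_rfl
  have hsub : insert v (greedy S i).2 ⊆ (Finset.range (i + 1)).biUnion S := by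
    intro u hu
    rw [Finset.mem_insert] at hu
    rcases hu with rfl | hu
    · exact Finset.mem_biUnion.mpr ⟨i, Finset.mem_range.mpr (Nat.lt_succ_self i), hv⟩
    · obtain ⟨hut, hur⟩ := hr u hu
      exact Finset.mem_biUnion.mpr ⟨rnd S u, Finset.mem_range.mpr
        (Nat.lt_succ_of_le hur), rnd_mem S ((mem_tot_iff S u).1 hut)⟩
  have := Finset.card_le_card hsub
  rw [Finset.card_insert_of_notMem hvni, hc] at this
  have := hcard i
  omega

lemma burn_gp_subset_mburn (G : SimpleGraph V) (s : V)
    (hcard : ∀ i : ℕ, ((Finset.range (i + 1)).biUnion S).card ≤ i) :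
    ∀ t, burn G s (gp S) t ⊆ mburn G s S t := by
  intro t
  induction t with
  | zero => rw [mburn_zero, burn_zero]
  | succ t ih =>
      intro v hv
      rw [burn_succ, Finset.mem_union] at hv
      rw [mburn_succ, Finset.mem_union]
      rcases hv with hv | hv
      · exact Or.inl (ih hv)
      · rw [Finset.mem_filter] at hv
        obtain ⟨-, ⟨u, hu, hadj⟩, hp⟩ := hv
        right
        rw [Finset.mem_filter]
        refine ⟨Finset.mem_univ v, ⟨u, ih hu, hadj⟩, ?_⟩
        intro i hi hvS
        obtain ⟨j, hj, hgp⟩ := protected_by S hcard hvS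
        exact hp j (hj.trans hi) hgp

lemma gp_valid (G : SimpleGraph V) (s : V) (hS : MValid G s S) : Valid G s (gp S) := by
  refine ⟨rfl, ?_⟩
  intro t v hv
  cases t with
  | zero => exact absurd hv (by simp [gp, greedy])
  | succ r =>
      have huniq : ∀ i < r + 1, gp S i ≠ some v := by
        intro i hi h
        exact absurd (gp_unique S h hv) (Nat.ne_of_lt hi)
      refine ⟨?_, huniq⟩
      obtain ⟨hvtot, -, -, -⟩ := gp_succ_spec S hv
      obtain ⟨m, hm⟩ := (mem_tot_iff S v).1 hvtot
      obtain ⟨j, hj, hgp⟩ := protected_by S hS.2.2 hm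
      have hrj : r + 1 = j := gp_unique S hv hgp
      have htm : r + 1 ≤ m := hrj ▸ hj
      have hnb : v ∉ mburn G s S (m - 1) := (hS.2.1 m v hm).1
      intro hb
      apply hnb
      apply mburn_mono G s S (show r + 1 - 1 ≤ m - 1 by omega)
      exact burn_gp_subset_mburn S G s hS.2.2 (r + 1 - 1) hb

end ModToStd

end Firefighter

open Firefighter in
/-- The standard firefighter game (protect at most one unburned vertex per
round) and the modified game (protect any set of unburned vertices with a
burning neighbor, with at most `i` vertices protected in total after `i` rounds)
are equivalent: one admits a strategy leaving at most `k` burned vertices iff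
the other does. -/
theorem standard_game_iff_modified_game
    {V : Type*} [Fintype V] [DecidableEq V] (G : SimpleGraph V)
    (s : V) (k : ℕ) :
    (∃ p : ℕ → Option V, Valid G s p ∧
      (Finset.univ.filter (Burns G s p)).card ≤ k) ↔
    (∃ S : ℕ → Finset V, MValid G s S ∧
      (Finset.univ.filter (MBurns G s S)).card ≤ k) := by
  constructor
  · rintro ⟨p, hval, hcard⟩
    refine ⟨mkS G s p, mkS_mvalid G s p hval, le_trans (Finset.card_le_card ?_) hcard⟩
    apply Finset.monotone_filter_right
    rintro v - ⟨t, hv⟩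
    exact ⟨t, mburn_mkS_subset_burn G s p t hv⟩
  · rintro ⟨S, hval, hcard⟩
    refine ⟨gp S, gp_valid S G s hval, le_trans (Finset.card_le_card ?_) hcard⟩
    apply Finset.monotone_filter_right
    rintro v - ⟨t, hv⟩
    exact ⟨t, burn_gp_subset_mburn S G s hval.2.2 t hv⟩
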